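/- Let p, q ∈ (1,∞) with 1/p + 1/q = 1, let ζ ∈ ℝⁿ with ‖ζ‖_q = 1, define ζ̄_i = -sgn(ζ_i)·|ζ_i|^(q-1), and let I = {i : ζ̄_i ≠ 0}. Then there exist C > 0 and ε > 0 such that for all ω ∈ ℝⁿ with ‖ω - ζ̄‖ ≤ ε and ‖ω‖_p = 1, one has 1 + ⟨ζ, ω⟩ ≥ C·∑_{i∈I} |ω_i - ζ̄_i|² + (1/p)·∑_{i∉I} |ω_i|^p. -/

import Mathlib

open scoped Classical

lemma core_aux (p : ℝ) (hp : 1 < p) :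
    ∃ c : ℝ, 0 < c ∧ ∀ u : ℝ, 1/2 ≤ u → u ≤ 3/2 →
      c * (u - 1)^2 ≤ 1/p * u^p - u + (1 - 1/p) := by
  have hp0 : (0:ℝ) < p := by linarith
  set m : ℝ := min ((1/2:ℝ)^(p-2)) ((3/2:ℝ)^(p-2)) with hm
  have hmpos : 0 < m :=
    lt_min (Real.rpow_pos_of_pos (by norm_num) _) (Real.rpow_pos_of_pos (by norm_num) _)
  have hxm : ∀ x : ℝ, 1/2 ≤ x → x ≤ 3/2 → m ≤ x ^ (p-2) := by
    intro x hx1 hx2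
    rcases le_or_gt p 2 with h | h
    · exact le_trans (min_le_right _ _)
        (Real.rpow_le_rpow_of_nonpos (by linarith) hx2 (by linarith))
    · exact le_trans (min_le_left _ _)
        (Real.rpow_le_rpow (by norm_num) hx1 (by linarith))
  set c : ℝ := (p-1)*m/4 with hc
  have hcpos : 0 < c := by
    have : 0 < p - 1 := by linarith
    positivity
  refine ⟨c, hcpos, ?_⟩
  set g : ℝ → ℝ := fun u => 1/p * u^p - u + (1 - 1/p) - c*(u-1)^2 with hg
  set g' : ℝ → ℝ := fun u => u^(p-1) - 1 - 2*c*(u-1) with hg'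
  have hder : ∀ u : ℝ, 0 < u → HasDerivAt g (g' u) u := by
    intro u hu
    have h1 : HasDerivAt (fun x : ℝ => x ^ p) (p * u^(p-1)) u :=
      Real.hasDerivAt_rpow_const (Or.inl hu.ne')
    have h4 : HasDerivAt (fun x : ℝ => (x-1)^2) (2*(u-1)) u := by
      have := ((hasDerivAt_id u).sub_const 1).fun_pow 2
      simpa using this
    have h5 := (((h1.const_mul (1/p)).sub (hasDerivAt_id u)).add_const (1 - 1/p)).sub
      (h4.const_mul c)
    refine h5.congr_deriv ?_
    simp only [hg']
    field_simp
  have hder' : ∀ u : ℝ, 0 < u → HasDerivAt g' ((p-1) * u^(p-2) - 2*c) u := by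
    intro u hu
    have h1 : HasDerivAt (fun x : ℝ => x ^ (p-1)) ((p-1) * u^(p-1-1)) u :=
      Real.hasDerivAt_rpow_const (Or.inl hu.ne')
    rw [show p - 1 - 1 = p - 2 by ring] at h1
    have h2 := (h1.sub_const 1).sub (((hasDerivAt_id u).sub_const 1).const_mul (2*c))
    refine h2.congr_deriv ?_
    ring
  have hmono' : StrictMonoOn g' (Set.Icc (1/2 : ℝ) (3/2)) := by
    apply strictMonoOn_of_deriv_pos (convex_Icc _ _)
    · intro x hx
      exact (hder' x (by linarith [hx.1])).continuousAt.continuousWithinAt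
    · intro x hx
      rw [interior_Icc] at hx
      rw [(hder' x (by linarith [hx.1.le])).deriv]
      have h1 := hxm x hx.1.le hx.2.le
      have h2 : 0 < p - 1 := by linarith
      have := mul_le_mul_of_nonneg_left h1 h2.le
      rw [hc]; nlinarith
  have hg'1 : g' 1 = 0 := by simp [hg', Real.one_rpow]
  have hg1 : g 1 = 0 := by
    simp [hg, Real.one_rpow]
  have mono2 : MonotoneOn g (Set.Icc (1:ℝ) (3/2)) := by
    apply monotoneOn_of_deriv_nonneg (convex_Icc _ _)
    · intro x hx
      exact (hder x (by linarith [hx.1])).continuousAt.continuousWithinAt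
    · rw [interior_Icc]
      intro x hx
      exact (hder x (by linarith [hx.1])).differentiableAt.differentiableWithinAt
    · intro x hx
      rw [interior_Icc] at hx
      rw [(hder x (by linarith [hx.1])).deriv]
      have : g' 1 < g' x :=
        hmono' ⟨by norm_num, by norm_num⟩ ⟨by linarith [hx.1], hx.2.le⟩ hx.1
      linarith
  have anti1 : AntitoneOn g (Set.Icc (1/2:ℝ) 1) := by
    apply antitoneOn_of_deriv_nonpos (convex_Icc _ _)
    · intro x hx
      exact (hder x (by linarith [hx.1])).continuousAt.continuousWithinAt
    · rw [interior_Icc]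
      intro x hx
      exact (hder x (by linarith [hx.1])).differentiableAt.differentiableWithinAt
    · intro x hx
      rw [interior_Icc] at hx
      rw [(hder x (by linarith [hx.1])).deriv]
      have : g' x < g' 1 :=
        hmono' ⟨hx.1.le, by linarith [hx.2]⟩ ⟨by norm_num, by norm_num⟩ hx.2
      linarith
  intro u h1 h2
  have key : 0 ≤ g u := by
    rcases le_total u 1 with h | h
    · have := anti1 ⟨h1, h⟩ ⟨by norm_num, le_refl (1:ℝ)⟩ h
      linarith
    · have := mono2 (Set.mem_Icc.mpr ⟨le_refl (1:ℝ), by norm_num⟩) ⟨h, h2⟩ h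
      linarith
  simp only [hg] at key
  linarith

lemma key_pos (p q : ℝ) (hp : 1 < p) (hq : 1 < q) (hpq : 1/p + 1/q = 1)
    (a : ℝ) (ha : 0 < a) :
    ∃ c e : ℝ, 0 < c ∧ 0 < e ∧ ∀ t : ℝ, |t + a^(q-1)| ≤ e →
      c * (t + a^(q-1))^2 ≤ 1/p * |t|^p + 1/q * a^q + a * t := by
  obtain ⟨c', hc'pos, hcore⟩ := core_aux p hp
  have hp0 : (0:ℝ) < p := by linarith
  have hq0 : (0:ℝ) < q := by linarith
  have hmul : p * q = p + q := by field_simp at hpq; linarith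
  have hpq' : (q-1)*p = q := by linear_combination hmul
  have hq1 : 1/q = 1 - 1/p := by linarith
  set A : ℝ := a^(q-1) with hAdef
  have hA : 0 < A := Real.rpow_pos_of_pos ha _
  have hAp : A^p = a^q := by
    rw [hAdef, ← Real.rpow_mul ha.le, hpq']
  have haA : a * A = a^q := by
    have h := Real.rpow_add ha 1 (q-1)
    rw [Real.rpow_one] at h
    rw [hAdef, ← h]
    norm_num
  have haq : 0 < a^q := Real.rpow_pos_of_pos ha q
  refine ⟨c' * a^q / A^2, A/2, by positivity, by positivity, ?_⟩
  intro t ht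
  obtain ⟨hl, hr⟩ := abs_le.mp ht
  have htneg : t < 0 := by linarith
  set u : ℝ := -t / A with hu
  have hu1 : 1/2 ≤ u := by rw [hu, le_div_iff₀ hA]; linarith
  have hu2 : u ≤ 3/2 := by rw [hu, div_le_iff₀ hA]; linarith
  have htu : t = -(u * A) := by
    rw [hu, div_mul_cancel₀ _ hA.ne']; ring
  have habs_t : |t| = u * A := by rw [abs_of_neg htneg, htu]; ring
  have hup : |t|^p = u^p * A^p := by
    rw [habs_t, Real.mul_rpow (by linarith) hA.le]
  have hcore' := hcore u hu1 hu2
  calc c' * a^q / A^2 * (t+A)^2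
      = a^q * (c' * (u-1)^2) := by
        rw [htu]; field_simp; ring
    _ ≤ a^q * (1/p * u^p - u + (1-1/p)) :=
        mul_le_mul_of_nonneg_left hcore' haq.le
    _ = 1/p * |t|^p + 1/q * a^q + a * t := by
        rw [hup, hAp, hq1, htu, ← haA]; ring

lemma key_gen (p q : ℝ) (hp : 1 < p) (hq : 1 < q) (hpq : 1/p + 1/q = 1)
    (a : ℝ) (ha : a ≠ 0) :
    ∃ c e : ℝ, 0 < c ∧ 0 < e ∧ ∀ t : ℝ,
      |t - (-Real.sign a * |a|^(q-1))| ≤ e →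
      c * (t - (-Real.sign a * |a|^(q-1)))^2 ≤ 1/p * |t|^p + 1/q * |a|^q + a * t := by
  rcases ha.lt_or_gt with hneg | hpos
  · obtain ⟨c, e, hc, he, H⟩ := key_pos p q hp hq hpq (-a) (by linarith)
    refine ⟨c, e, hc, he, ?_⟩
    intro t ht
    have hs : Real.sign a = -1 := Real.sign_of_neg hneg
    have habs : |a| = -a := abs_of_neg hneg
    have heq : t - (-Real.sign a * |a|^(q-1)) = -((-t) + (-a)^(q-1)) := by
      rw [hs, habs]; ring
    have h2 := H (-t) (by rw [← abs_neg, ← heq]; exact ht)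
    rw [heq]
    calc c * (-(-t + (-a)^(q-1)))^2 = c * ((-t) + (-a)^(q-1))^2 := by ring
      _ ≤ 1/p * |(-t)|^p + 1/q * (-a)^q + (-a) * (-t) := h2
      _ = 1/p * |t|^p + 1/q * |a|^q + a * t := by rw [abs_neg, habs]; ring
  · obtain ⟨c, e, hc, he, H⟩ := key_pos p q hp hq hpq a hpos
    refine ⟨c, e, hc, he, ?_⟩
    intro t ht
    have hs : Real.sign a = 1 := Real.sign_of_pos hpos
    have habs : |a| = a := abs_of_pos hpos
    have heq : t - (-Real.sign a * |a|^(q-1)) = t + a^(q-1) := by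
      rw [hs, habs]; ring
    rw [heq] at ht ⊢
    rw [habs]
    exact H t ht

/-- The quadratic/`p`-th power lower estimate in Lemma 4.1 of the paper. -/
theorem stmt_3 (n : ℕ) (p q : ℝ) (hp : 1 < p) (hq : 1 < q) (hpq : 1 / p + 1 / q = 1)
    (ζ : Fin n → ℝ) (hζ : (∑ i, |ζ i| ^ q) ^ (1 / q) = 1)
    (ζbar : Fin n → ℝ) (hζbar : ζbar = fun i => -Real.sign (ζ i) * |ζ i| ^ (q - 1)) :
    ∃ C > (0 : ℝ), ∃ ε > (0 : ℝ), ∀ ω : Fin n → ℝ,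
      Real.sqrt (∑ i, (ω i - ζbar i) ^ 2) ≤ ε → (∑ i, |ω i| ^ p) ^ (1 / p) = 1 →
      C * (∑ i ∈ Finset.univ.filter (fun i => ζbar i ≠ 0), |ω i - ζbar i| ^ 2) +
          (1 / p) * (∑ i ∈ Finset.univ.filter (fun i => ¬ ζbar i ≠ 0), |ω i| ^ p) ≤
        1 + ∑ i, ζ i * ω i := by
  have hp0 : (0:ℝ) < p := by linarith
  have hq0 : (0:ℝ) < q := by linarith
  have hzero : ∀ i, ζbar i = 0 ↔ ζ i = 0 := by
    intro i
    rw [hζbar]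
    constructor
    · intro h
      by_contra hne
      have h1 : Real.sign (ζ i) ≠ 0 := fun hs => hne (Real.sign_eq_zero_iff.mp hs)
      have h2 : (0:ℝ) < |ζ i| ^ (q-1) :=
        Real.rpow_pos_of_pos (abs_pos.mpr hne) _
      exact (mul_ne_zero (neg_ne_zero.mpr h1) h2.ne') h
    · intro h; simp [h, Real.sign_zero]
  -- norm of ζ
  have hζsum : ∑ i, |ζ i| ^ q = 1 := by
    have hS0 : (0:ℝ) ≤ ∑ i, |ζ i| ^ q :=
      Finset.sum_nonneg fun i _ => Real.rpow_nonneg (abs_nonneg _) _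
    have h := congrArg (fun x : ℝ => x ^ q) hζ
    simp only [Real.one_rpow] at h
    rwa [← Real.rpow_mul hS0, one_div_mul_cancel hq0.ne', Real.rpow_one] at h
  set I := Finset.univ.filter (fun i => ζbar i ≠ 0) with hI
  have keyI : ∀ i ∈ I, ∃ c e : ℝ, 0 < c ∧ 0 < e ∧ ∀ t : ℝ, |t - ζbar i| ≤ e →
      c * (t - ζbar i)^2 ≤ 1/p * |t|^p + 1/q * |ζ i|^q + ζ i * t := by
    intro i hi
    have hζi : ζ i ≠ 0 := by
      intro h
      exact (Finset.mem_filter.mp hi).2 ((hzero i).mpr h)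
    have := key_gen p q hp hq hpq (ζ i) hζi
    rw [hζbar]
    exact this
  choose! cf ef hcf hef hkey using keyI
  set C : ℝ := if h : I.Nonempty then I.inf' h cf else 1 with hC
  set ε : ℝ := if h : I.Nonempty then I.inf' h ef else 1 with hε
  have hCpos : 0 < C := by
    rw [hC]; split_ifs with h
    · exact (Finset.lt_inf'_iff h).mpr fun i hi => hcf i hi
    · norm_num
  have hεpos : 0 < ε := by
    rw [hε]; split_ifs with h
    · exact (Finset.lt_inf'_iff h).mpr fun i hi => hef i hi
    · norm_num
  have hCle : ∀ i ∈ I, C ≤ cf i := by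
    intro i hi
    rw [hC]; split_ifs with h
    · exact Finset.inf'_le _ hi
    · exact absurd ⟨i, hi⟩ h
  have hεle : ∀ i ∈ I, ε ≤ ef i := by
    intro i hi
    rw [hε]; split_ifs with h
    · exact Finset.inf'_le _ hi
    · exact absurd ⟨i, hi⟩ h
  refine ⟨C, hCpos, ε, hεpos, ?_⟩
  intro ω hωdist hωnorm
  have hωsum : ∑ i, |ω i| ^ p = 1 := by
    have hS0 : (0:ℝ) ≤ ∑ i, |ω i| ^ p :=
      Finset.sum_nonneg fun i _ => Real.rpow_nonneg (abs_nonneg _) _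
    have h := congrArg (fun x : ℝ => x ^ p) hωnorm
    simp only [Real.one_rpow] at h
    rwa [← Real.rpow_mul hS0, one_div_mul_cancel hp0.ne', Real.rpow_one] at h
  have hdist_i : ∀ i, |ω i - ζbar i| ≤ ε := by
    intro i
    refine le_trans ?_ hωdist
    rw [← Real.sqrt_sq_eq_abs]
    exact Real.sqrt_le_sqrt (Finset.single_le_sum (f := fun j => (ω j - ζbar j)^2) (fun j _ => sq_nonneg _) (Finset.mem_univ i))
  have hsplit : 1 + ∑ i, ζ i * ω i
      = ∑ i, (1/p * |ω i|^p + 1/q * |ζ i|^q + ζ i * ω i) := by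
    rw [Finset.sum_add_distrib, Finset.sum_add_distrib, ← Finset.mul_sum, ← Finset.mul_sum,
      hωsum, hζsum]
    linarith
  rw [hsplit,
    ← Finset.sum_filter_add_sum_filter_not Finset.univ (fun i => ζbar i ≠ 0)
      (fun i => 1/p * |ω i|^p + 1/q * |ζ i|^q + ζ i * ω i)]
  have part1 : C * (∑ i ∈ I, |ω i - ζbar i| ^ 2)
      ≤ ∑ i ∈ I, (1/p * |ω i|^p + 1/q * |ζ i|^q + ζ i * ω i) := by
    rw [Finset.mul_sum]
    apply Finset.sum_le_sum
    intro i hi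
    have h1 := hkey i hi (ω i) (le_trans (hdist_i i) (hεle i hi))
    have h2 : C * |ω i - ζbar i| ^ 2 ≤ cf i * (ω i - ζbar i)^2 := by
      rw [sq_abs]
      exact mul_le_mul_of_nonneg_right (hCle i hi) (sq_nonneg _)
    linarith
  have part2 : (1 / p) * (∑ i ∈ Finset.univ.filter (fun i => ¬ ζbar i ≠ 0), |ω i| ^ p)
      = ∑ i ∈ Finset.univ.filter (fun i => ¬ ζbar i ≠ 0),
          (1/p * |ω i|^p + 1/q * |ζ i|^q + ζ i * ω i) := by
    rw [Finset.mul_sum]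
    apply Finset.sum_congr rfl
    intro i hi
    have h0 : ζ i = 0 := (hzero i).mp (not_not.mp (Finset.mem_filter.mp hi).2)
    simp [h0, Real.zero_rpow hq0.ne']
  rw [part2]
  exact add_le_add part1 (le_of_eq rfl)
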